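/- For x > 2, the coefficient function Q₃(x) := −H[(1/2)·Li₁(1/x)² − (Li₂(1/x) − Li₂(1/(x−1)))] admits the power series expansion Q₃(x) = Σ_{k≥2} (1/k)·( (1/k!)·s(k,2) + Σ_{r=1}^{k−1} C(k−1,r)/(k−r)² )·x^{−k}, where s(k,2) are unsigned Stirling numbers of the first kind. -/

import Mathlib

open Filter

/-- Unsigned Stirling numbers of the first kind. -/
def stirling1 : ℕ → ℕ → ℕ
  | 0, 0 => 1
  | 0, _ + 1 => 0
  | _ + 1, 0 => 0
  | k + 1, n + 1 => k * stirling1 k (n + 1) + stirling1 k n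

noncomputable def hsum (k : ℕ) : ℝ := ∑ i ∈ Finset.range k, (1:ℝ)/((i:ℝ)+1)

lemma hsum_nonneg (k : ℕ) : 0 ≤ hsum k :=
  Finset.sum_nonneg fun i _ => by positivity

lemma hsum_le (k : ℕ) : hsum k ≤ k := by
  calc hsum k ≤ ∑ i ∈ Finset.range k, (1:ℝ) := by
        refine Finset.sum_le_sum fun i _ => ?_
        rw [div_le_one (by positivity)]
        linarith [Nat.cast_nonneg (α := ℝ) i]
    _ = k := by simp

lemma stirling1_zero (k : ℕ) : stirling1 (k+1) 0 = 0 := by simp [stirling1]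

lemma stirling1_one (k : ℕ) : stirling1 (k+1) 1 = k.factorial := by
  induction k with
  | zero => simp [stirling1]
  | succ n ih =>
      show n.succ * stirling1 (n+1) 1 + stirling1 (n+1) 0 = _
      rw [ih, stirling1_zero, Nat.factorial_succ, Nat.succ_eq_add_one]
      ring

lemma stirling1_two (k : ℕ) : (stirling1 (k+2) 2 : ℝ) = (k+1).factorial * hsum (k+1) := by
  induction k with
  | zero =>
      show ((1 * stirling1 1 2 + stirling1 1 1 : ℕ) : ℝ) = _
      simp [stirling1, hsum]
  | succ n ih =>
      show (((n+2) * stirling1 (n+2) 2 + stirling1 (n+2) 1 : ℕ) : ℝ) = _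
      push_cast
      rw [ih, stirling1_one]
      rw [show hsum (n+2) = hsum (n+1) + 1/((n:ℝ)+2) by
        simp only [hsum, Finset.sum_range_succ]; push_cast; ring]
      rw [Nat.factorial_succ (n+1)]
      push_cast
      have : ((n:ℝ)+2) ≠ 0 := by positivity
      field_simp
      ring

lemma hasSum_regroup {g : ℕ × ℕ → ℝ} {R : ℕ → ℝ} {S : ℝ}
    (hnn : ∀ p, 0 ≤ g p)
    (hrow : ∀ n, HasSum (fun m => g (n, m)) (R n))
    (hR : HasSum R S) :
    HasSum (fun k => ∑ p ∈ Finset.HasAntidiagonal.antidiagonal k, g p) S := by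
  have hsummable : Summable g := by
    refine (summable_prod_of_nonneg (fun p => hnn p)).2 ⟨fun n => (hrow n).summable, ?_⟩
    apply hR.summable.congr
    intro n
    exact ((hrow n).tsum_eq).symm
  have hgS : HasSum g S := by
    have := hsummable.hasSum
    have ht : ∑' p, g p = S := by
      rw [Summable.tsum_prod' hsummable (fun n => (hrow n).summable)]
      rw [tsum_congr fun n => (hrow n).tsum_eq]
      exact hR.tsum_eq
    rwa [ht] at this
  have hsig : HasSum (fun p : Σ n : ℕ, Finset.HasAntidiagonal.antidiagonal n => g p.2)
      S := (Finset.HasAntidiagonal.sigmaAntidiagonalEquivProd.hasSum_iff).2 hgS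
  refine hsig.sigma fun n => ?_
  have := hasSum_fintype (fun p : Finset.HasAntidiagonal.antidiagonal n => g p)
  rwa [Finset.sum_coe_sort] at this

lemma negbinom {y : ℝ} (h0 : 0 ≤ y) (h1 : y < 1) (n : ℕ) :
    HasSum (fun m : ℕ => (((n + m).choose m : ℕ) : ℝ) * y ^ m) ((1 - y)⁻¹ ^ (n + 1)) := by
  induction n with
  | zero =>
      simpa using hasSum_geometric_of_lt_one h0 h1
  | succ n ih =>
      have hgeo := hasSum_geometric_of_lt_one h0 h1
      have hrow : ∀ i : ℕ, HasSum (fun l => ((((n + i).choose i : ℕ) : ℝ) * y ^ i) * y ^ l)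
          ((((n + i).choose i : ℕ) : ℝ) * y ^ i * (1 - y)⁻¹) :=
        fun i => hgeo.mul_left _
      have hR : HasSum (fun i => (((n + i).choose i : ℕ) : ℝ) * y ^ i * (1 - y)⁻¹)
          ((1 - y)⁻¹ ^ (n + 1) * (1 - y)⁻¹) := ih.mul_right _
      have h := hasSum_regroup (g := fun p => ((((n + p.1).choose p.1 : ℕ) : ℝ) * y ^ p.1) * y ^ p.2)
        (fun p => by positivity) hrow hR
      rw [← pow_succ] at h
      refine h.congr_fun fun k => ?_
      rw [Finset.Nat.sum_antidiagonal_eq_sum_range_succ_mk]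
      have : ∀ i ∈ Finset.range (k+1),
          ((((n + i).choose i : ℕ) : ℝ) * y ^ i) * y ^ (k - i)
            = (((n + i).choose i : ℕ) : ℝ) * y ^ k := by
        intro i hi
        rw [Finset.mem_range] at hi
        rw [mul_assoc, ← pow_add, show i + (k - i) = k by omega]
      rw [Finset.sum_congr rfl this, ← Finset.sum_mul]
      have hnat : ∑ i ∈ Finset.range (k+1), ((n + i).choose i) = (n + 1 + k).choose k := by
        have h1 : ∀ i ∈ Finset.range (k+1), (n + i).choose i = (n + i).choose n := by
          intro i _
          rw [← Nat.choose_symm (Nat.le_add_right n i), Nat.add_sub_cancel_left]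
        rw [Finset.sum_congr rfl h1]
        have h2 : ∑ i ∈ Finset.range (k+1), (n + i).choose n
            = ∑ m ∈ Finset.Ico n (n + (k+1)), m.choose n := by
          rw [Finset.sum_Ico_eq_sum_range]
          simp
        rw [h2, show n + (k+1) = (n + k) + 1 by omega, Finset.Ico_add_one_right_eq_Icc,
          Nat.sum_Icc_choose]
        have hs := Nat.choose_symm (n := n + k + 1) (k := n + 1) (by omega)
        rw [show n + k + 1 - (n + 1) = k by omega] at hs
        rw [show n + 1 + k = n + k + 1 by omega, ← hs]
      rw [← Nat.cast_sum, hnat]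

lemma sumaux (p : ℕ) {r : ℝ} (h0 : 0 < r) (h1 : r < 1) :
    Summable (fun j : ℕ => ((j:ℝ)+2)^p * r^j) := by
  have h := summable_pow_mul_geometric_of_norm_lt_one p
    (r := r) (by rwa [Real.norm_eq_abs, abs_of_pos h0])
  have h2 : Summable (fun j : ℕ => (((j+2:ℕ)):ℝ)^p * r^(j+2)) :=
    ((summable_nat_add_iff 2).2 h)
  have h3 := h2.mul_left (r⁻¹^2)
  apply h3.congr
  intro j
  have hr : r ≠ 0 := ne_of_gt h0
  push_cast
  field_simp
  ring

noncomputable def Dco (j : ℕ) : ℝ :=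
  ∑ r ∈ Finset.Icc 1 (j + 1), ((j + 1).choose r : ℝ) / ((j : ℝ) + 2 - r) ^ 2

noncomputable def Cstat (j : ℕ) : ℝ :=
  (1 / (Nat.factorial (j + 2) : ℝ)) * (stirling1 (j + 2) 2 : ℝ) + Dco j

lemma Cstat_fst (j : ℕ) :
    (1 / (Nat.factorial (j + 2) : ℝ)) * (stirling1 (j + 2) 2 : ℝ)
      = hsum (j+1) / ((j:ℝ)+2) := by
  rw [stirling1_two, Nat.factorial_succ (j+1)]
  have h1 : ((j+1).factorial : ℝ) ≠ 0 := by positivity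
  push_cast
  field_simp
  ring

lemma Dco_nonneg (j : ℕ) : 0 ≤ Dco j := by
  refine Finset.sum_nonneg fun r hr => ?_
  rw [Finset.mem_Icc] at hr
  have : (0:ℝ) < ((j : ℝ) + 2 - r) ^ 2 := by
    have : (r:ℝ) ≤ (j:ℝ) + 1 := by exact_mod_cast hr.2
    nlinarith
  positivity

lemma Dco_le (j : ℕ) : Dco j ≤ 2^(j+1) := by
  have h1 : Dco j ≤ ∑ r ∈ Finset.Icc 1 (j + 1), (((j + 1).choose r : ℕ) : ℝ) := by
    refine Finset.sum_le_sum fun r hr => ?_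
    rw [Finset.mem_Icc] at hr
    have hrle : (r:ℝ) ≤ (j:ℝ) + 1 := by exact_mod_cast hr.2
    have h2 : (1:ℝ) ≤ ((j : ℝ) + 2 - r) ^ 2 := by nlinarith
    rw [div_le_iff₀ (by linarith)]
    nlinarith [Nat.cast_nonneg (α := ℝ) ((j+1).choose r)]
  refine h1.trans ?_
  have h3 : ∑ r ∈ Finset.Icc 1 (j + 1), (((j + 1).choose r : ℕ) : ℝ)
      ≤ ∑ r ∈ Finset.range (j + 2), (((j + 1).choose r : ℕ) : ℝ) := by
    refine Finset.sum_le_sum_of_subset_of_nonneg ?_ (fun _ _ _ => by positivity)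
    intro r hr
    rw [Finset.mem_Icc] at hr
    rw [Finset.mem_range]
    omega
  refine h3.trans ?_
  rw [← Nat.cast_sum, Nat.sum_range_choose]
  norm_num

lemma Cstat_nonneg (j : ℕ) : 0 ≤ Cstat j := by
  rw [Cstat, Cstat_fst]
  have := hsum_nonneg (j+1)
  have h2 : (0:ℝ) < (j:ℝ)+2 := by positivity
  have := Dco_nonneg j
  positivity

lemma Cstat_le (j : ℕ) : Cstat j ≤ ((j:ℝ)+2)^2 * 2^j := by
  rw [Cstat, Cstat_fst]
  have h1 : hsum (j+1) / ((j:ℝ)+2) ≤ (j:ℝ)+1 := by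
    rw [div_le_iff₀ (by positivity)]
    have := hsum_le (j+1)
    push_cast at this
    nlinarith [hsum_nonneg (j+1), Nat.cast_nonneg (α := ℝ) j]
  have h2 := Dco_le j
  have h3 : ((j:ℝ)+1) + 2^(j+1) ≤ ((j:ℝ)+2)^2 * 2^j := by
    have hj : (j:ℝ)+1 ≤ 2^j := by
      have := j.lt_two_pow_self
      exact_mod_cast Nat.succ_le_of_lt this
    have hp : (0:ℝ) < 2^j := by positivity
    have hj0 : (0:ℝ) ≤ (j:ℝ) := Nat.cast_nonneg j
    rw [pow_succ]
    nlinarith [sq_nonneg ((j:ℝ))]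
  linarith

lemma summable_coef {c : ℕ → ℝ} (hc : ∀ j, |c j| ≤ ((j:ℝ)+2)^2 * 2^j)
    {t : ℝ} (ht : 2 < t) :
    Summable (fun j : ℕ => c j * t ^ (-((j : ℤ) + 2))) := by
  have ht0 : (0:ℝ) < t := by linarith
  have hr0 : (0:ℝ) < 2/t := by positivity
  have hr1 : 2/t < 1 := by rw [div_lt_one ht0]; linarith
  refine Summable.of_norm_bounded (((sumaux 2 hr0 hr1).mul_left (1/t^2))) ?_
  intro j
  have hz : t ^ (-((j : ℤ) + 2)) = (t ^ (j+2))⁻¹ := by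
    rw [← zpow_natCast t (j+2), ← zpow_neg]
    norm_num
  rw [Real.norm_eq_abs, abs_mul, hz,
    abs_of_pos (show (0:ℝ) < (t ^ (j+2))⁻¹ by positivity)]
  have h1 : |c j| * (t ^ (j+2))⁻¹ ≤ (((j:ℝ)+2)^2 * 2^j) * (t ^ (j+2))⁻¹ := by
    apply mul_le_mul_of_nonneg_right (hc j) (by positivity)
  refine h1.trans (le_of_eq ?_)
  rw [pow_add, div_pow]
  field_simp

lemma L1 {c : ℕ → ℝ} (hc : ∀ j, |c j| ≤ ((j:ℝ)+2)^2 * 2^j)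
    {x : ℝ} (hx : 2 < x) :
    HasDerivAt (fun t : ℝ => ∑' j : ℕ, c j * t ^ (-((j : ℤ) + 2)))
      (∑' j : ℕ, c j * (-((j:ℝ)+2)) * x ^ (-((j : ℤ) + 3))) x := by
  obtain ⟨b, hb2, hbx⟩ : ∃ b : ℝ, 2 < b ∧ b < x := ⟨(2 + x) / 2, by linarith, by linarith⟩
  have hb0 : (0:ℝ) < b := by linarith
  have hr0 : (0:ℝ) < 2/b := by positivity
  have hr1 : 2/b < 1 := by rw [div_lt_one hb0]; linarith
  -- uniform bound for the derivative series
  set u : ℕ → ℝ := fun j => ((j:ℝ)+2)^3 * (2/b)^j / b^3 with hu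
  have hus : Summable u := by
    have := (sumaux 3 hr0 hr1).mul_right (1/b^3)
    apply this.congr
    intro j
    rw [hu]
    ring
  refine hasDerivAt_of_tendstoUniformlyOn (l := (atTop : Filter ℕ))
    (g := fun t : ℝ => ∑' j : ℕ, c j * t ^ (-((j : ℤ) + 2)))
    (g' := fun t : ℝ => ∑' j : ℕ, c j * (-((j:ℝ)+2)) * t ^ (-((j : ℤ) + 3)))
    (f := fun N => fun t : ℝ =>
      ∑ j ∈ Finset.range N, c j * t ^ (-((j : ℤ) + 2)))
    (f' := fun N => fun t : ℝ =>
      ∑ j ∈ Finset.range N, c j * (-((j:ℝ)+2)) * t ^ (-((j : ℤ) + 3)))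
    (isOpen_Ioi (a := b)) ?_ ?_ ?_ (Set.mem_Ioi.2 hbx)
  · -- uniform convergence of derivative partial sums
    apply tendstoUniformlyOn_tsum_nat hus
    intro j t htmem
    rw [Set.mem_Ioi] at htmem
    have ht0 : (0:ℝ) < t := by linarith
    have hz : t ^ (-((j : ℤ) + 3)) = (t ^ (j+3))⁻¹ := by
      rw [← zpow_natCast t (j+3), ← zpow_neg]
      norm_num
    rw [Real.norm_eq_abs, hz, abs_mul, abs_mul, abs_neg,
      abs_of_pos (show (0:ℝ) < (j:ℝ)+2 by positivity),
      abs_of_pos (show (0:ℝ) < (t ^ (j+3))⁻¹ by positivity)]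
    have hle1 : |c j| * ((j:ℝ)+2) ≤ (((j:ℝ)+2)^2 * 2^j) * ((j:ℝ)+2) :=
      mul_le_mul_of_nonneg_right (hc j) (by positivity)
    have hle2 : (t ^ (j+3))⁻¹ ≤ (b ^ (j+3))⁻¹ := by
      apply inv_anti₀ (by positivity)
      exact pow_le_pow_left₀ hb0.le htmem.le _
    calc |c j| * ((j:ℝ)+2) * (t ^ (j+3))⁻¹
        ≤ ((((j:ℝ)+2)^2 * 2^j) * ((j:ℝ)+2)) * (b ^ (j+3))⁻¹ := by
          apply mul_le_mul hle1 hle2 (by positivity) (by positivity)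
      _ = u j := by
          show _ = ((j:ℝ) + 2) ^ 3 * (2 / b) ^ j / b ^ 3
          rw [pow_add, div_pow]
          field_simp
  · -- each partial sum differentiable
    filter_upwards with N t htmem
    rw [Set.mem_Ioi] at htmem
    have ht0 : t ≠ 0 := by intro h; rw [h] at htmem; linarith
    apply HasDerivAt.fun_sum
    intro j _
    have h := (hasDerivAt_zpow (-((j : ℤ) + 2)) t (Or.inl ht0)).const_mul (c j)
    have he : ((-((j : ℤ) + 2) : ℤ) : ℝ) = -((j:ℝ)+2) := by push_cast; ring
    have he2 : (-((j : ℤ) + 2)) - 1 = -((j : ℤ) + 3) := by ring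
    rw [he2, ← mul_assoc, mul_comm (c j) _, he] at h
    rw [mul_comm (-((j:ℝ)+2)) (c j)] at h
    exact h
  · -- pointwise convergence
    intro t htmem
    rw [Set.mem_Ioi] at htmem
    exact (summable_coef hc (by linarith)).hasSum.tendsto_sum_nat

lemma L2 {c : ℕ → ℝ} (hc : ∀ j, |c j| ≤ ((j:ℝ)+2)^2 * 2^j) :
    Tendsto (fun t : ℝ => ∑' j : ℕ, c j * t ^ (-((j : ℤ) + 2))) atTop (nhds 0) := by
  have hhalf : Summable (fun j : ℕ => ((j:ℝ)+2)^2 * (1/2:ℝ)^j) :=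
    sumaux 2 (by norm_num) (by norm_num)
  set K : ℝ := ∑' j : ℕ, ((j:ℝ)+2)^2 * (1/2:ℝ)^j with hK
  apply squeeze_zero_norm' (a := fun t : ℝ => K * (t^2)⁻¹)
  · filter_upwards [eventually_ge_atTop (4:ℝ)] with t ht
    have ht2 : (2:ℝ) < t := by linarith
    have ht0 : (0:ℝ) < t := by linarith
    have hsum1 : Summable (fun j : ℕ => c j * t ^ (-((j : ℤ) + 2))) := summable_coef hc ht2
    have hbound : ∀ j : ℕ, ‖c j * t ^ (-((j : ℤ) + 2))‖ ≤ (((j:ℝ)+2)^2 * (1/2:ℝ)^j) * (t^2)⁻¹ := by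
      intro j
      have hz : t ^ (-((j : ℤ) + 2)) = (t ^ (j+2))⁻¹ := by
        rw [← zpow_natCast t (j+2), ← zpow_neg]
        norm_num
      rw [Real.norm_eq_abs, abs_mul, hz,
        abs_of_pos (show (0:ℝ) < (t ^ (j+2))⁻¹ by positivity)]
      have h1 : |c j| * (t ^ (j+2))⁻¹ ≤ (((j:ℝ)+2)^2 * 2^j) * (t ^ (j+2))⁻¹ :=
        mul_le_mul_of_nonneg_right (hc j) (by positivity)
      refine h1.trans ?_
      rw [pow_add]
      have h2 : (2:ℝ)^j / t^j ≤ (1/2:ℝ)^j := by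
        rw [← div_pow]
        apply pow_le_pow_left₀ (by positivity)
        rw [div_le_div_iff₀ ht0 (by norm_num)]
        linarith
      have h3 : (0:ℝ) < t^j := by positivity
      have h4 : (0:ℝ) < t^2 := by positivity
      rw [mul_inv, ← mul_assoc]
      apply mul_le_mul_of_nonneg_right _ (by positivity)
      calc ((j:ℝ)+2)^2 * 2^j * (t^j)⁻¹ = ((j:ℝ)+2)^2 * ((2:ℝ)^j / t^j) := by ring
        _ ≤ ((j:ℝ)+2)^2 * (1/2:ℝ)^j := by
            apply mul_le_mul_of_nonneg_left h2 (by positivity)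
    calc ‖∑' j : ℕ, c j * t ^ (-((j : ℤ) + 2))‖
        ≤ ∑' j : ℕ, ‖c j * t ^ (-((j : ℤ) + 2))‖ := norm_tsum_le_tsum_norm hsum1.norm
      _ ≤ ∑' j : ℕ, (((j:ℝ)+2)^2 * (1/2:ℝ)^j) * (t^2)⁻¹ :=
          Summable.tsum_le_tsum hbound hsum1.norm (hhalf.mul_right _)
      _ = K * (t^2)⁻¹ := by rw [tsum_mul_right]
  · have h1 : Tendsto (fun t : ℝ => (t^2)⁻¹) atTop (nhds 0) := by
      have := tendsto_pow_neg_atTop (n := 2) (by norm_num) (𝕜 := ℝ)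
      apply this.congr
      intro t
      rw [zpow_neg, zpow_natCast]
    have := h1.const_mul K
    simpa using this

lemma coefA {y : ℝ} (k : ℕ) :
    ∑ p ∈ Finset.HasAntidiagonal.antidiagonal k, (y^(p.1+1)/((p.1:ℝ)+1)) * (y^(p.2+1)/((p.2:ℝ)+1))
      = (2 * hsum (k+1) / ((k:ℝ)+2)) * y^(k+2) := by
  rw [Finset.Nat.sum_antidiagonal_eq_sum_range_succ_mk]
  have step1 : ∀ i ∈ Finset.range (k+1),
      (y^(i+1)/((i:ℝ)+1)) * (y^((k-i)+1)/(((k-i:ℕ):ℝ)+1))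
        = ((1:ℝ)/(((i:ℝ)+1) * (((k-i:ℕ):ℝ)+1))) * y^(k+2) := by
    intro i hi
    rw [Finset.mem_range] at hi
    rw [div_mul_div_comm, ← pow_add, show (i+1)+((k-i)+1) = k+2 by omega]
    ring
  rw [Finset.sum_congr rfl step1, ← Finset.sum_mul]
  congr 1
  have step2 : ∀ i ∈ Finset.range (k+1),
      (1:ℝ)/(((i:ℝ)+1) * (((k-i:ℕ):ℝ)+1))
        = (1/((k:ℝ)+2)) * ((1:ℝ)/((i:ℝ)+1) + (1:ℝ)/(((k-i:ℕ):ℝ)+1)) := by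
    intro i hi
    rw [Finset.mem_range] at hi
    have hc : ((k-i:ℕ):ℝ) = (k:ℝ) - (i:ℝ) := by
      rw [Nat.cast_sub (by omega)]
    rw [hc]
    have h1 : (0:ℝ) < (i:ℝ)+1 := by positivity
    have h2 : (0:ℝ) < (k:ℝ)-(i:ℝ)+1 := by
      have : (i:ℝ) ≤ (k:ℝ) := by exact_mod_cast Nat.le_of_lt_succ hi
      linarith
    have h3 : (0:ℝ) < (k:ℝ)+2 := by positivity
    field_simp
    ring
  rw [Finset.sum_congr rfl step2, ← Finset.mul_sum, Finset.sum_add_distrib]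
  have hrefl : ∑ i ∈ Finset.range (k+1), (1:ℝ)/(((k-i:ℕ):ℝ)+1) = hsum (k+1) := by
    have := Finset.sum_range_reflect (fun i => (1:ℝ)/((i:ℝ)+1)) (k+1)
    simp only [Nat.add_sub_cancel] at this
    exact this
  rw [hrefl]
  rw [show ∑ i ∈ Finset.range (k+1), (1:ℝ)/((i:ℝ)+1) = hsum (k+1) from rfl]
  ring

lemma coefD {y : ℝ} (j : ℕ) :
    (∑ p ∈ Finset.HasAntidiagonal.antidiagonal (j+1),
        (((p.1+p.2).choose p.2 : ℕ):ℝ) * y^(p.1+p.2+1) / ((p.1:ℝ)+1)^2)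
      - y^((j+1)+1)/(((j+1:ℕ):ℝ)+1)^2 = Dco j * y^(j+2) := by
  rw [Finset.Nat.sum_antidiagonal_eq_sum_range_succ_mk]
  have step1 : ∀ i ∈ Finset.range (j+2),
      (((i+(j+1-i)).choose (j+1-i) : ℕ):ℝ) * y^(i+(j+1-i)+1) / ((i:ℝ)+1)^2
        = (((j+1).choose (j+1-i) : ℕ):ℝ) / ((i:ℝ)+1)^2 * y^(j+2) := by
    intro i hi
    rw [Finset.mem_range] at hi
    rw [show i+(j+1-i) = j+1 by omega]
    ring
  rw [Finset.sum_congr rfl step1, Finset.sum_range_succ]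
  rw [show j+1-(j+1) = 0 by omega, Nat.choose_zero_right]
  have hc1 : (((j+1:ℕ)):ℝ)+1 = (j:ℝ)+2 := by push_cast; ring
  rw [hc1]
  have hcancel : ((1:ℕ):ℝ) / ((j:ℝ)+2)^2 * y^(j+2) = y^((j+1)+1)/((j:ℝ)+2)^2 := by
    push_cast; ring
  rw [add_sub_assoc, hcancel, sub_self, add_zero, ← Finset.sum_mul]
  congr 1
  have hrefl := Finset.sum_range_reflect
    (fun i => (((j+1).choose (j+1-i) : ℕ):ℝ) / ((i:ℝ)+1)^2) (j+1)
  simp only [Nat.add_sub_cancel] at hrefl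
  rw [← hrefl]
  rw [Dco, ← Finset.Ico_add_one_right_eq_Icc, Finset.sum_Ico_eq_sum_range]
  rw [show j+1+1-1 = j+1 by omega]
  refine Finset.sum_congr rfl fun i hi => ?_
  rw [Finset.mem_range] at hi
  rw [show j+1-(j-i) = i+1 by omega]
  rw [show (1:ℕ)+i = i+1 by omega]
  rw [show (j:ℝ)+2-((i+1:ℕ):ℝ) = ((j-i:ℕ):ℝ)+1 by
    rw [Nat.cast_sub (by omega)]; push_cast; ring]

lemma seriesId (Li₂ : ℝ → ℝ)
    (hLi₂ : ∀ z : ℝ, |z| < 1 → Li₂ z = ∑' k : ℕ, z ^ (k + 1) / ((k : ℝ) + 1) ^ 2)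
    {x : ℝ} (hx : 2 < x) :
    HasSum (fun j : ℕ => Cstat j * (1/x)^(j+2))
      ((1/2) * (-Real.log (1 - 1/x))^2 - (Li₂ (1/x) - Li₂ (1/(x-1)))) := by
  have hx0 : (0:ℝ) < x := by linarith
  have hy0 : (0:ℝ) < 1/x := by positivity
  have hy1 : (1:ℝ)/x < 1 := by rw [div_lt_one hx0]; linarith
  have hyabs : |1/x| < 1 := by rw [abs_of_pos hy0]; exact hy1
  have hx1 : (1:ℝ) < x - 1 := by linarith
  have hz0 : (0:ℝ) < 1/(x-1) := by positivity
  have hz1 : (1:ℝ)/(x-1) < 1 := by rw [div_lt_one (by linarith)]; linarith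
  have hzabs : |1/(x-1)| < 1 := by rw [abs_of_pos hz0]; exact hz1
  set y : ℝ := 1/x with hy_def
  -- Part A : the log-square series
  have HL := Real.hasSum_pow_div_log_of_abs_lt_one hyabs
  set L : ℝ := -Real.log (1 - y) with hL_def
  have hrowA : ∀ n : ℕ, HasSum (fun m : ℕ => (y^(n+1)/((n:ℝ)+1)) * (y^(m+1)/((m:ℝ)+1)))
      ((y^(n+1)/((n:ℝ)+1)) * L) := fun n => HL.mul_left _
  have hRA : HasSum (fun n : ℕ => (y^(n+1)/((n:ℝ)+1)) * L) (L * L) := HL.mul_right L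
  have hA0 := hasSum_regroup
    (g := fun p : ℕ × ℕ => (y^(p.1+1)/((p.1:ℝ)+1)) * (y^(p.2+1)/((p.2:ℝ)+1)))
    (fun p => by positivity) hrowA hRA
  have hA := hA0.mul_left (1/2)
  -- Part B : Li₂ at y
  have hsumB : Summable (fun n : ℕ => y^(n+1)/((n:ℝ)+1)^2) := by
    refine Summable.of_nonneg_of_le (fun n => by positivity) (fun n => ?_)
      (summable_geometric_of_lt_one hy0.le hy1)
    have h1 : (1:ℝ) ≤ ((n:ℝ)+1)^2 := by nlinarith [Nat.cast_nonneg (α := ℝ) n]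
    calc y^(n+1)/((n:ℝ)+1)^2 ≤ y^(n+1) := by
          rw [div_le_iff₀ (by positivity)]
          nlinarith [pow_nonneg hy0.le (n+1)]
      _ ≤ y^n := pow_le_pow_of_le_one hy0.le hy1.le (by omega)
  have hB : HasSum (fun n : ℕ => y^(n+1)/((n:ℝ)+1)^2) (Li₂ y) := by
    rw [hLi₂ y hyabs]
    exact hsumB.hasSum
  -- Part C : Li₂ at 1/(x-1)
  have hsumC : Summable (fun n : ℕ => (1/(x-1))^(n+1)/((n:ℝ)+1)^2) := by
    refine Summable.of_nonneg_of_le (fun n => by positivity) (fun n => ?_)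
      (summable_geometric_of_lt_one hz0.le hz1)
    have h1 : (1:ℝ) ≤ ((n:ℝ)+1)^2 := by nlinarith [Nat.cast_nonneg (α := ℝ) n]
    calc (1/(x-1))^(n+1)/((n:ℝ)+1)^2 ≤ (1/(x-1))^(n+1) := by
          rw [div_le_iff₀ (by positivity)]
          nlinarith [pow_nonneg hz0.le (n+1)]
      _ ≤ (1/(x-1))^n := pow_le_pow_of_le_one hz0.le hz1.le (by omega)
  have hC : HasSum (fun n : ℕ => (1/(x-1))^(n+1)/((n:ℝ)+1)^2) (Li₂ (1/(x-1))) := by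
    rw [hLi₂ (1/(x-1)) hzabs]
    exact hsumC.hasSum
  -- Part D : expand Li₂ (1/(x-1)) in powers of y
  have hzy : (1:ℝ)/(x-1) = y * (1-y)⁻¹ := by
    rw [hy_def]
    have h1 : x ≠ 0 := ne_of_gt hx0
    have h2 : x - 1 ≠ 0 := by intro h; rw [sub_eq_zero] at h; rw [← h] at hx1; linarith
    have h3 : 1 - 1/x ≠ 0 := by
      have : (1:ℝ) - 1/x = (x-1)/x := by field_simp
      rw [this]
      positivity
    field_simp
  have hrowD : ∀ n : ℕ, HasSum
      (fun m : ℕ => (((n+m).choose m : ℕ):ℝ) * y^(n+m+1) / ((n:ℝ)+1)^2)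
      (y^(n+1)/((n:ℝ)+1)^2 * ((1-y)⁻¹)^(n+1)) := by
    intro n
    have h := (negbinom hy0.le hy1 n).mul_left (y^(n+1)/((n:ℝ)+1)^2)
    refine h.congr_fun fun m => ?_
    rw [show n+m+1 = (n+1)+m by omega, pow_add]
    ring
  have hRD : HasSum (fun n : ℕ => y^(n+1)/((n:ℝ)+1)^2 * ((1-y)⁻¹)^(n+1)) (Li₂ (1/(x-1))) := by
    refine hC.congr_fun fun n => ?_
    rw [hzy, mul_pow]
    ring
  have hD := hasSum_regroup
    (g := fun p : ℕ × ℕ => (((p.1+p.2).choose p.2 : ℕ):ℝ) * y^(p.1+p.2+1) / ((p.1:ℝ)+1)^2)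
    (fun p => by positivity) hrowD hRD
  -- Part E : difference
  have hE := hD.sub hB
  -- Part F : drop vanishing first term
  have hF : HasSum (fun j : ℕ =>
      (∑ p ∈ Finset.HasAntidiagonal.antidiagonal (j+1),
        (((p.1+p.2).choose p.2 : ℕ):ℝ) * y^(p.1+p.2+1) / ((p.1:ℝ)+1)^2)
      - y^((j+1)+1)/(((j+1:ℕ):ℝ)+1)^2) (Li₂ (1/(x-1)) - Li₂ y) := by
    refine (hasSum_nat_add_iff (f := fun k : ℕ =>
      (∑ p ∈ Finset.HasAntidiagonal.antidiagonal k,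
        (fun p : ℕ × ℕ => (((p.1+p.2).choose p.2 : ℕ):ℝ) * y^(p.1+p.2+1) / ((p.1:ℝ)+1)^2) p)
      - y^(k+1)/((k:ℝ)+1)^2) 1).mpr ?_
    have h0 : (∑ p ∈ Finset.HasAntidiagonal.antidiagonal (0:ℕ),
        (fun p : ℕ × ℕ => (((p.1+p.2).choose p.2 : ℕ):ℝ) * y^(p.1+p.2+1) / ((p.1:ℝ)+1)^2) p)
        - y^(0+1)/(((0:ℕ):ℝ)+1)^2 = 0 := by
      simp
    simpa [h0] using hE
  have hF2 : HasSum (fun j : ℕ => Dco j * y^(j+2)) (Li₂ (1/(x-1)) - Li₂ y) :=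
    hF.congr_fun (fun j => (coefD j).symm)
  -- Assemble
  have hA2 : HasSum (fun j : ℕ => (hsum (j+1) / ((j:ℝ)+2)) * y^(j+2)) ((1/2) * (L * L)) := by
    refine hA.congr_fun fun k => ?_
    rw [coefA]
    ring
  have htot := hA2.add hF2
  have hval : (1/2) * (L * L) + (Li₂ (1/(x-1)) - Li₂ y)
      = (1/2) * L^2 - (Li₂ y - Li₂ (1/(x-1))) := by ring
  rw [hval] at htot
  refine htot.congr_fun fun j => ?_
  rw [Cstat, Cstat_fst]
  ring

lemma Acoef_bound (j : ℕ) : |(1 / ((j:ℝ) + 2)) * Cstat j| ≤ ((j:ℝ)+2)^2 * 2^j := by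
  have h0 := Cstat_nonneg j
  have h1 := Cstat_le j
  have hj2 : (0:ℝ) < (j:ℝ)+2 := by positivity
  rw [abs_of_nonneg (by positivity)]
  have h2 : (1 / ((j:ℝ) + 2)) * Cstat j ≤ 1 * Cstat j := by
    apply mul_le_mul_of_nonneg_right _ h0
    rw [div_le_one hj2]
    linarith
  linarith

/-- Let `Q₃ := −H[(1/2)·Li₁(1/x)² − (Li₂(1/x) − Li₂(1/(x−1)))]`, i.e.
`x·Q₃′(x) = −((1/2)·Li₁(1/x)² − ∇[Li₂(1/·)](x))` with the integration constant fixed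
by decay at infinity.  Then for `x > 2`,
`Q₃(x) = Σ_{k≥2} (1/k)·((1/k!)·s(k,2) + Σ_{r=1}^{k−1} C(k−1,r)/(k−r)²)·x^{−k}`. -/
theorem stmt_18 (Li₂ : ℝ → ℝ)
    (hLi₂ : ∀ z : ℝ, |z| < 1 → Li₂ z = ∑' k : ℕ, z ^ (k + 1) / ((k : ℝ) + 1) ^ 2)
    (Q₃ : ℝ → ℝ)
    (hderiv : ∀ x : ℝ, 2 < x → HasDerivAt Q₃
      (-(((1 / 2) * (-Real.log (1 - 1 / x)) ^ 2
          - (Li₂ (1 / x) - Li₂ (1 / (x - 1)))) / x)) x)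
    (hnorm : Tendsto Q₃ atTop (nhds 0)) :
    ∀ x : ℝ, 2 < x →
      Q₃ x = ∑' j : ℕ, (1 / ((j : ℝ) + 2))
        * ((1 / (Nat.factorial (j + 2) : ℝ)) * (stirling1 (j + 2) 2 : ℝ)
            + ∑ r ∈ Finset.Icc 1 (j + 1),
                ((j + 1).choose r : ℝ) / ((j : ℝ) + 2 - r) ^ 2)
        * x ^ (-((j : ℤ) + 2)) := by
  set A : ℕ → ℝ := fun j => (1 / ((j:ℝ) + 2)) * Cstat j with hA_def
  have hAb : ∀ j, |A j| ≤ ((j:ℝ)+2)^2 * 2^j := Acoef_bound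
  set F : ℝ → ℝ := fun t => ∑' j : ℕ, A j * t ^ (-((j : ℤ) + 2)) with hF_def
  -- F has the same derivative as Q₃ on (2, ∞)
  have hFd : ∀ t : ℝ, 2 < t → HasDerivAt F
      (-(((1 / 2) * (-Real.log (1 - 1 / t)) ^ 2
          - (Li₂ (1 / t) - Li₂ (1 / (t - 1)))) / t)) t := by
    intro t ht
    have ht0 : (0:ℝ) < t := by linarith
    have h := L1 hAb ht
    have hs := seriesId Li₂ hLi₂ ht
    have hterm : ∀ j : ℕ, A j * (-((j:ℝ)+2)) * t ^ (-((j : ℤ) + 3))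
        = (-t⁻¹) * (Cstat j * (1/t)^(j+2)) := by
      intro j
      have hz : t ^ (-((j : ℤ) + 3)) = (t ^ (j+3))⁻¹ := by
        rw [← zpow_natCast t (j+3), ← zpow_neg]
        norm_num
      rw [hz, hA_def]
      have hj2 : ((j:ℝ)+2) ≠ 0 := by positivity
      have htn : t ^ (j+3) ≠ 0 := by positivity
      have htn2 : t ^ (j+2) ≠ 0 := by positivity
      rw [show (1:ℝ)/t = t⁻¹ from one_div t, inv_pow]
      rw [show t ^ (j+3) = t ^ (j+2) * t by rw [pow_succ]]
      field_simp
    rw [tsum_congr hterm, tsum_mul_left, hs.tsum_eq] at h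
    have : -t⁻¹ * ((1/2) * (-Real.log (1 - 1/t))^2 - (Li₂ (1/t) - Li₂ (1/(t-1))))
        = -(((1 / 2) * (-Real.log (1 - 1 / t)) ^ 2
          - (Li₂ (1 / t) - Li₂ (1 / (t - 1)))) / t) := by
      ring
    rwa [this] at h
  have hFtop : Tendsto F atTop (nhds 0) := L2 hAb
  intro x hx
  -- the difference is constant on [x, ∞) and tends to 0
  have hd0 : ∀ t : ℝ, 2 < t → HasDerivAt (fun s => Q₃ s - F s) 0 t := by
    intro t ht
    have := (hderiv t ht).sub (hFd t ht)
    simp only [sub_self] at this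
    exact this
  have hconst : ∀ t : ℝ, x ≤ t → Q₃ t - F t = Q₃ x - F x := by
    intro t hxt
    have h := constant_of_has_deriv_right_zero (f := fun s => Q₃ s - F s) (a := x) (b := t)
      (fun s hs => ((hd0 s (lt_of_lt_of_le hx hs.1)).continuousAt).continuousWithinAt)
      (fun s hs => ((hd0 s (lt_of_lt_of_le hx hs.1)).hasDerivWithinAt))
    exact h t ⟨hxt, le_refl t⟩
  have heq : ∀ᶠ t in atTop, Q₃ t - F t = Q₃ x - F x := by
    filter_upwards [eventually_ge_atTop x] with t ht using hconst t ht
  have htend1 : Tendsto (fun t => Q₃ t - F t) atTop (nhds (Q₃ x - F x)) := by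
    refine Tendsto.congr' ?_ tendsto_const_nhds
    filter_upwards [heq] with t ht using ht.symm
  have htend0 : Tendsto (fun t => Q₃ t - F t) atTop (nhds 0) := by simpa using hnorm.sub hFtop
  have hzero : Q₃ x - F x = 0 := tendsto_nhds_unique htend1 htend0
  have hQF : Q₃ x = F x := by linarith
  rw [hQF, hF_def]
  refine tsum_congr fun j => ?_
  rw [hA_def]
  simp only [Cstat, Dco]
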